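/- Let q be a prime power with q ≥ 2t−1 and t ≥ 2, let x be a primitive element of F_q, and let E be the 2t×t matrix over F_q whose first row is (1,0,...,0), whose second row is (0,...,0,1), and whose remaining 2t−2 rows are the Vandermonde rows (1, x^i, x^{2i}, ..., x^{(t-1)i}) for i = 1,...,2t−2. Then any t rows of E are linearly independent. -/
import Mathlib


open Finset

/-- An orthogonal array of strength `t` with `k` rows (constraints), columns indexed
by `ι`, symbols in `α`, and index `lam`: in every choice of `t` distinct rows,
every `t`-tuple of symbols appears in exactly `lam` columns. -/
def IsOAOn {α ι : Type*} [Fintype α] [DecidableEq α] [Fintype ι] {k : ℕ} (t : ℕ)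
    (A : Fin k → ι → α) (lam : ℕ) : Prop :=
  ∀ rows : Fin t → Fin k, Function.Injective rows → ∀ x : Fin t → α,
    (Finset.univ.filter fun c : ι => ∀ i, A (rows i) c = x i).card = lam

/-- An array is simple if no two of its columns are identical. -/
def IsSimpleArr {α ι : Type*} {k : ℕ} (A : Fin k → ι → α) : Prop :=
  Function.Injective fun c : ι => fun i => A i c

/-- A large set of orthogonal arrays: a family (indexed by `σ`) of simple OAs of
strength `t` and index `lam` such that every `k`-tuple of symbols occurs as a
column of exactly one array of the family. -/
def IsLOAOn {α ι σ : Type*} [Fintype α] [DecidableEq α] [Fintype ι] {k : ℕ} (t : ℕ)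
    (A : σ → Fin k → ι → α) (lam : ℕ) : Prop :=
  (∀ s, IsOAOn t (A s) lam ∧ IsSimpleArr (A s)) ∧
  ∀ x : Fin k → α, ∃! p : σ × ι, (fun i => A p.1 i p.2) = x

/-- A strong double large set of orthogonal arrays `SDLOA(N; t, k, v)`:
the family `A_0, …, A_{N-1}` is an LOA, the derived arrays `B_j`
(whose `s`-th column is the `j`-th column of `A_s`) form an LOA, and the arrays
`D` (`j`-th column = `j`-th column of `A_j`) and `D'` (`j`-th column =
`(N-1-j)`-th column of `A_j`) are both OAs. -/
def IsSDLOA {α : Type*} [Fintype α] [DecidableEq α] {k N : ℕ} (t : ℕ)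
    (A : Fin N → Fin k → Fin N → α) (lam : ℕ) : Prop :=
  IsLOAOn t A lam ∧
  IsLOAOn t (fun (j : Fin N) (i : Fin k) (s : Fin N) => A s i j) lam ∧
  IsOAOn t (fun (i : Fin k) (j : Fin N) => A j i j) lam ∧
  IsOAOn t (fun (i : Fin k) (j : Fin N) => A j i (Fin.rev j)) lam

/-- A `t`-multimagic square of order `n`: an `n × n` matrix whose entries are the
consecutive integers `0, …, n^2 - 1` and such that, for every `1 ≤ e ≤ t`,
the entrywise `e`-th power has equal row sums, column sums, and sums on both
diagonals. -/
def IsMultimagic (n t : ℕ) (M : Fin n → Fin n → ℕ) : Prop :=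
  (∀ i j, M i j < n ^ 2) ∧
  (Function.Injective fun p : Fin n × Fin n => M p.1 p.2) ∧
  ∀ e, 1 ≤ e → e ≤ t → ∃ S,
    (∀ i, ∑ j, (M i j) ^ e = S) ∧ (∀ j, ∑ i, (M i j) ^ e = S) ∧
    (∑ i, (M i i) ^ e = S) ∧ (∑ i, (M i (Fin.rev i)) ^ e = S)

/-- A set of `m` complementary `t`-multimagic squares of order `n`, `m`-CMS(`n`,`t`):
`m` multimagic squares such that summing the `(t+1)`-st powers of the entries over
all `m` squares along any fixed row, any fixed column, or either diagonal always
gives `m · S_{t+1}(n)` (the conditions are stated multiplied through by `n`). -/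
def IsCMS (m n t : ℕ) (B : Fin m → Fin n → Fin n → ℕ) : Prop :=
  (∀ s, IsMultimagic n t (B s)) ∧
  (∀ i, n * ∑ s, ∑ j, (B s i j) ^ (t + 1) = m * ∑ k ∈ Finset.range (n ^ 2), k ^ (t + 1)) ∧
  (∀ j, n * ∑ s, ∑ i, (B s i j) ^ (t + 1) = m * ∑ k ∈ Finset.range (n ^ 2), k ^ (t + 1)) ∧
  (n * ∑ s, ∑ i, (B s i i) ^ (t + 1) = m * ∑ k ∈ Finset.range (n ^ 2), k ^ (t + 1)) ∧
  (n * ∑ s, ∑ i, (B s i (Fin.rev i)) ^ (t + 1) = m * ∑ k ∈ Finset.range (n ^ 2), k ^ (t + 1))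

/-- Any `t` rows of the matrix `M` are linearly independent. -/
def RowsIndep {F : Type*} [Field F] {m' : Type*} {s : ℕ} (t : ℕ)
    (M : Matrix m' (Fin s) F) : Prop :=
  ∀ rows : Fin t → m', Function.Injective rows → LinearIndependent F fun i => M (rows i)

/-- The block matrix `(A, B)` (with `A, B` of the same shape) is nonsingular, phrased
via bijectivity of the associated linear map. -/
def NonsingularPair {F : Type*} [Field F] {m' : Type*} {s : ℕ}
    (A B : Matrix m' (Fin s) F) : Prop :=
  Function.Bijective fun p : (Fin s → F) × (Fin s → F) => A.mulVec p.1 + B.mulVec p.2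

/-- For a prime power `q ≥ 2t-1` (`t ≥ 2`) and a primitive element
`x` of `F_q`, the `2t × t` matrix with first row `(1,0,…,0)`, second row
`(0,…,0,1)`, and remaining rows the Vandermonde rows `(1, x^i, …, x^{(t-1)i})`
for `i = 1, …, 2t-2`, has any `t` rows linearly independent. -/
theorem vandermonde_rows_indep {F : Type} [Field F] [Fintype F] [DecidableEq F] {t : ℕ}
    (ht : 2 ≤ t) (hq : 2 * t - 1 ≤ Fintype.card F)
    (x : F) (hx : ∀ y : F, y ≠ 0 → ∃ n : ℕ, x ^ n = y)
    (E : Matrix (Fin (2 * t)) (Fin t) F)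
    (hE : ∀ (i : Fin (2 * t)) (j : Fin t),
      E i j = if (i : ℕ) = 0 then (if (j : ℕ) = 0 then 1 else 0)
        else if (i : ℕ) = 1 then (if (j : ℕ) = t - 1 then 1 else 0)
        else x ^ (((i : ℕ) - 1) * (j : ℕ))) :
    RowsIndep t E := by
  classical
  intro rows hinj
  have ht0 : 0 < t := by omega
  -- `x` is nonzero
  have hx0 : x ≠ 0 := by
    have h01 : ((1 : F) : F) ≠ 0 := one_ne_zero
    have hcard : 3 ≤ Fintype.card F := le_trans (by omega) hq
    have hne : (({0, 1} : Finset F)ᶜ).Nonempty := by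
      rw [← Finset.card_pos, Finset.card_compl]
      have h2 : ({0, 1} : Finset F).card ≤ 2 := by
        apply le_trans (Finset.card_insert_le _ _); simp
      omega
    obtain ⟨y, hy⟩ := hne
    simp only [Finset.mem_compl, Finset.mem_insert, Finset.mem_singleton, not_or] at hy
    obtain ⟨n, hn⟩ := hx y hy.1
    intro h0
    rcases n with - | n
    · exact hy.2 (by simpa using hn.symm)
    · exact hy.1 (by rw [← hn, h0, zero_pow (Nat.succ_ne_zero n)])
  -- the order of `x` in the unit group is `card F - 1`
  set u : Fˣ := Units.mk0 x hx0 with hu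
  have hgen : ∀ w : Fˣ, w ∈ Subgroup.zpowers u := by
    intro w
    obtain ⟨n, hn⟩ := hx w.val w.ne_zero
    refine ⟨(n : ℤ), ?_⟩
    ext
    simp [hu, hn]
  have hord : orderOf u = Fintype.card F - 1 := by
    rw [orderOf_eq_card_of_forall_mem_zpowers hgen, Nat.card_eq_fintype_card,
      Fintype.card_units]
  have hx_ne_one : ∀ d : ℕ, 0 < d → d < 2 * t - 2 → x ^ d ≠ 1 := by
    intro d hd1 hd2 h
    have hud : u ^ d = 1 := by
      ext; simpa [hu] using h
    have hdvd := orderOf_dvd_of_pow_eq_one hud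
    rw [hord] at hdvd
    have hle := Nat.le_of_dvd hd1 hdvd
    omega
  -- powers `x^m` for `1 ≤ m ≤ 2t-2` are pairwise distinct
  have hxinj : ∀ m m' : ℕ, 1 ≤ m → m ≤ 2 * t - 2 → 1 ≤ m' → m' ≤ 2 * t - 2 →
      x ^ m = x ^ m' → m = m' := by
    have key : ∀ m m' : ℕ, 1 ≤ m → m < m' → m' ≤ 2 * t - 2 → x ^ m ≠ x ^ m' := by
      intro m m' hm hlt hle h
      have hxm : x ^ m ≠ 0 := pow_ne_zero _ hx0
      have h1 : x ^ m * x ^ (m' - m) = x ^ m * 1 := by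
        rw [← pow_add, Nat.add_sub_cancel' hlt.le, mul_one, h]
      have h2 : x ^ (m' - m) = 1 := mul_left_cancel₀ hxm h1
      exact hx_ne_one _ (by omega) (by omega) h2
    intro m m' h1 h2 h3 h4 h
    rcases lt_trichotomy m m' with hlt | he | hlt
    · exact absurd h (key _ _ h1 hlt h4)
    · exact he
    · exact absurd h.symm (key _ _ h3 hlt h2)
  -- the square submatrix
  set M : Matrix (Fin t) (Fin t) F := Matrix.of (fun i j => E (rows i) j) with hMdef
  have hker : ∀ v : Fin t → F, M.mulVec v = 0 → v = 0 := by
    intro v hv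
    have hv' : ∀ i : Fin t, ∑ j : Fin t, E (rows i) j * v j = 0 := by
      intro i
      have := congrFun hv i
      simpa [hMdef, Matrix.mulVec, dotProduct] using this
    set p : Polynomial F := ∑ j : Fin t, Polynomial.C (v j) * Polynomial.X ^ (j : ℕ)
      with hpdef
    have hcoeff : ∀ j : Fin t, p.coeff (j : ℕ) = v j := by
      intro j
      rw [hpdef, Polynomial.finset_sum_coeff, Finset.sum_eq_single j]
      · simp
      · intro b _ hb
        have : (b : ℕ) ≠ (j : ℕ) := fun h => hb (Fin.ext h)
        simp only [Polynomial.coeff_C_mul, Polynomial.coeff_X_pow, if_neg (Ne.symm this), mul_zero]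
      · simp
    have hcoeff_hi : ∀ k : ℕ, t ≤ k → p.coeff k = 0 := by
      intro k hk
      rw [hpdef, Polynomial.finset_sum_coeff]
      apply Finset.sum_eq_zero
      intro j _
      have : (j : ℕ) ≠ k := by have := j.isLt; omega
      simp only [Polynomial.coeff_C_mul, Polynomial.coeff_X_pow, if_neg (Ne.symm this), mul_zero]
    have hdeg : p.natDegree ≤ t - 1 :=
      Polynomial.natDegree_le_iff_coeff_eq_zero.mpr fun N hN => hcoeff_hi N (by omega)
    have heval : ∀ y : F, p.eval y = ∑ j : Fin t, v j * y ^ (j : ℕ) := by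
      intro y
      simp [hpdef, Polynomial.eval_finset_sum]
    -- evaluation at the special entries
    have hval_bound : ∀ i : Fin t, (rows i : ℕ) < 2 * t := fun i => (rows i).isLt
    have hrow0 : ∀ i : Fin t, (rows i : ℕ) = 0 → v ⟨0, ht0⟩ = 0 := by
      intro i hi
      have h := hv' i
      rw [Finset.sum_eq_single (⟨0, ht0⟩ : Fin t)] at h
      · rw [hE] at h; simpa [hi] using h
      · intro b _ hb
        have hb' : (b : ℕ) ≠ 0 := fun hh => hb (Fin.ext hh)
        rw [hE]; simp [hi, hb']
      · simp
    have hrow1 : ∀ i : Fin t, (rows i : ℕ) = 1 → v ⟨t - 1, by omega⟩ = 0 := by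
      intro i hi
      have h := hv' i
      rw [Finset.sum_eq_single (⟨t - 1, by omega⟩ : Fin t)] at h
      · rw [hE] at h; simpa [hi] using h
      · intro b _ hb
        have hb' : (b : ℕ) ≠ t - 1 := fun hh => hb (Fin.ext hh)
        rw [hE]; simp [hi, hb']
      · simp
    have hrowV : ∀ i : Fin t, (rows i : ℕ) ≠ 0 → (rows i : ℕ) ≠ 1 →
        p.eval (x ^ ((rows i : ℕ) - 1)) = 0 := by
      intro i hi0 hi1
      rw [heval]
      have h := hv' i
      rw [← h]
      apply Finset.sum_congr rfl
      intro j _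
      rw [hE]
      simp only [hi0, hi1, if_false]
      rw [← pow_mul, mul_comm]
    -- the injective family of roots
    set f : Fin t → F := fun i => if (rows i : ℕ) = 0 then 0 else x ^ ((rows i : ℕ) - 1)
      with hfdef
    have hfinj : ∀ i i' : Fin t, (rows i : ℕ) ≠ 1 → (rows i' : ℕ) ≠ 1 →
        f i = f i' → i = i' := by
      intro i i' h1 h1' hf
      rw [hfdef] at hf
      by_cases h0 : (rows i : ℕ) = 0 <;> by_cases h0' : (rows i' : ℕ) = 0
      · exact hinj (Fin.ext (h0.trans h0'.symm))
      · simp only [h0, h0', if_true, if_false] at hf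
        exact absurd hf.symm (pow_ne_zero _ hx0)
      · simp only [h0, h0', if_true, if_false] at hf
        exact absurd hf (pow_ne_zero _ hx0)
      · simp only [h0, h0', if_false] at hf
        have hb := hval_bound i
        have hb' := hval_bound i'
        have := hxinj _ _ (by omega) (by omega) (by omega) (by omega) hf
        exact hinj (Fin.ext (by omega))
    have hp0 : p = 0 := by
      by_cases h1 : ∃ i0 : Fin t, (rows i0 : ℕ) = 1
      · obtain ⟨i0, hi0⟩ := h1
        have hvt : v ⟨t - 1, by omega⟩ = 0 := hrow1 i0 hi0
        have hdeg2 : p.natDegree ≤ t - 2 := by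
          apply Polynomial.natDegree_le_iff_coeff_eq_zero.mpr
          intro N hN
          rcases Nat.lt_or_ge N t with hNt | hNt
          · have hNe : N = t - 1 := by omega
            have := hcoeff ⟨t - 1, by omega⟩
            rw [hNe]
            simpa [hvt] using this
          · exact hcoeff_hi N hNt
        refine Polynomial.eq_zero_of_natDegree_lt_card_of_eval_eq_zero p
          (f := fun i : {i : Fin t // i ≠ i0} => f i.1) ?_ ?_ ?_
        · intro a b hab
          have ha1 : (rows a.1 : ℕ) ≠ 1 := fun hh =>
            a.2 (hinj (Fin.ext (hh.trans hi0.symm)))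
          have hb1 : (rows b.1 : ℕ) ≠ 1 := fun hh =>
            b.2 (hinj (Fin.ext (hh.trans hi0.symm)))
          exact Subtype.ext (hfinj _ _ ha1 hb1 hab)
        · intro a
          have ha1 : (rows a.1 : ℕ) ≠ 1 := fun hh =>
            a.2 (hinj (Fin.ext (hh.trans hi0.symm)))
          show Polynomial.eval (f a.1) p = 0
          by_cases h0 : (rows a.1 : ℕ) = 0
          · have : f a.1 = 0 := by rw [hfdef]; simp [h0]
            rw [this, ← Polynomial.coeff_zero_eq_eval_zero]
            have := hcoeff ⟨0, ht0⟩
            simpa [hrow0 a.1 h0] using this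
          · have : f a.1 = x ^ ((rows a.1 : ℕ) - 1) := by rw [hfdef]; simp [h0]
            rw [this]
            exact hrowV a.1 h0 ha1
        · have hc : Fintype.card {i : Fin t // i ≠ i0} = t - 1 := by
            rw [Fintype.card_subtype_compl, Fintype.card_subtype_eq, Fintype.card_fin]
          omega
      · push_neg at h1
        refine Polynomial.eq_zero_of_natDegree_lt_card_of_eval_eq_zero p
          (f := f) ?_ ?_ ?_
        · intro a b hab
          exact hfinj _ _ (h1 a) (h1 b) hab
        · intro a
          by_cases h0 : (rows a : ℕ) = 0
          · have : f a = 0 := by rw [hfdef]; simp [h0]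
            rw [this, ← Polynomial.coeff_zero_eq_eval_zero]
            have := hcoeff ⟨0, ht0⟩
            simpa [hrow0 a h0] using this
          · have : f a = x ^ ((rows a : ℕ) - 1) := by rw [hfdef]; simp [h0]
            rw [this]
            exact hrowV a h0 (h1 a)
        · rw [Fintype.card_fin]
          omega
    funext j
    rw [← hcoeff j, hp0]
    simp
  have hMinj : Function.Injective M.mulVec := by
    have : Function.Injective M.mulVecLin := by
      rw [← LinearMap.ker_eq_bot, LinearMap.ker_eq_bot']
      intro v hvv
      exact hker v hvv
    simpa [Matrix.coe_mulVecLin] using this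
  have hMu : IsUnit M := Matrix.mulVec_injective_iff_isUnit.mp hMinj
  have := Matrix.linearIndependent_rows_iff_isUnit.mpr hMu
  exact this
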